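/- Let ℓ_i = λ_i + θ(N-i) for a partition λ₁ ≥ … ≥ λ_N ≥ 0 and parameter θ. Define eig_m(λ) = ∑_{k=1}^{N} (-θ)^{k-1} h^{(k)}_{m+1-k}(ℓ₁,…,ℓ_N), where h^{(k)}_m(x) = ∑_{k-element subsets S ⊆ {1,…,N}} h_m(x_S) is the sum of complete homogeneous symmetric polynomials of degree m over all k-element subsets of variables (with h_m = 0 for m < 0). Then in the ring of formal power series over ℚ(θ): 1 - θz ∑_{m=0}^∞ eig_m(λ) z^m = ∏_{i=1}^N (1 - (ℓ_i + θ)z)/(1 - ℓ_i z). -/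

import Mathlib

open PowerSeries

/-- `h_d` (complete homogeneous, degree `d`, `= 0` for `d < 0`) in the variables
`x i` for `i` in the finset `s`. -/
noncomputable def hSubset {N : ℕ} (x : Fin N → ℝ) (s : Finset (Fin N)) (d : ℤ) : ℝ :=
  if h : 0 ≤ d then ∑ μ ∈ s.sym d.toNat, (Multiset.map x μ.1).prod else 0

/-- `h^{(k)}_d(x) = ∑_{k-element subsets S} h_d(x_S)`. -/
noncomputable def hSym {N : ℕ} (x : Fin N → ℝ) (k : ℕ) (d : ℤ) : ℝ :=
  ∑ s ∈ Finset.univ.powersetCard k, hSubset x s d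


noncomputable def Hfun {N : ℕ} (x : Fin N → ℝ) (s : Finset (Fin N)) (n : ℕ) : ℝ :=
  ∑ μ ∈ s.sym n, (Multiset.map x μ.1).prod

lemma Hfun_zero {N : ℕ} (x : Fin N → ℝ) (s : Finset (Fin N)) : Hfun x s 0 = 1 := by
  rw [Hfun, Finset.sym_zero, Finset.sum_singleton]
  rfl

lemma Hfun_empty {N : ℕ} (x : Fin N → ℝ) (n : ℕ) : Hfun x ∅ (n + 1) = 0 := by
  simp [Hfun, Finset.sym_empty]

lemma Hfun_rec {N : ℕ} (x : Fin N → ℝ) {s : Finset (Fin N)} {i : Fin N} (hi : i ∉ s) (n : ℕ) :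
    Hfun x (insert i s) (n + 1) = x i * Hfun x (insert i s) n + Hfun x s (n + 1) := by
  classical
  rw [Hfun, ← Finset.sum_filter_add_sum_filter_not ((insert i s).sym (n + 1))
    (fun μ => i ∈ μ)]
  congr 1
  · rw [Hfun, Finset.mul_sum]
    refine Finset.sum_bij' (fun μ hμ => μ.erase i (Finset.mem_filter.1 hμ).2)
      (fun ν _ => i ::ₛ ν) ?_ ?_ ?_ ?_ ?_
    · intro μ hμ
      rw [Finset.mem_sym_iff]
      intro a ha
      exact Finset.mem_sym_iff.1 (Finset.mem_filter.1 hμ).1 a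
        (Multiset.mem_of_le (Multiset.erase_le _ _) ha)
    · intro ν hν
      rw [Finset.mem_filter]
      refine ⟨Finset.mem_sym_iff.2 fun a ha => ?_, Sym.mem_cons_self i ν⟩
      rcases Sym.mem_cons.1 ha with h | h
      · exact h ▸ Finset.mem_insert_self i s
      · exact Finset.mem_sym_iff.1 hν a h
    · intro μ hμ
      exact Sym.cons_erase _
    · intro ν hν
      exact Sym.erase_cons_head ν i
    · intro μ hμ
      have hi' : i ∈ (μ : Multiset (Fin N)) := (Finset.mem_filter.1 hμ).2
      show (Multiset.map x (μ : Multiset (Fin N))).prod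
          = x i * (Multiset.map x ((μ.erase i (Finset.mem_filter.1 hμ).2 : Sym (Fin N) n) :
              Multiset (Fin N))).prod
      rw [Sym.coe_erase, ← Multiset.cons_erase hi', Multiset.map_cons, Multiset.prod_cons,
        Multiset.erase_cons_head]
  · congr 1
    ext μ
    simp only [Finset.mem_filter, Finset.mem_sym_iff, Finset.mem_insert]
    constructor
    · rintro ⟨h1, h2⟩ a ha
      rcases h1 a ha with rfl | h
      · exact absurd ha h2
      · exact h
    · intro h
      exact ⟨fun a ha => Or.inr (h a ha), fun hiμ => hi (h i hiμ)⟩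

lemma constCoeff_ne {N : ℕ} (x : Fin N → ℝ) (i : Fin N) :
    constantCoeff (1 - C (x i) * X) ≠ 0 := by
  simp

lemma mk_Hfun_empty {N : ℕ} (x : Fin N → ℝ) : PowerSeries.mk (Hfun x ∅) = 1 := by
  ext n
  cases n with
  | zero => simp [Hfun_zero]
  | succ n => simp [Hfun_empty]

lemma key_step {N : ℕ} (x : Fin N → ℝ) {s : Finset (Fin N)} {i : Fin N} (hi : i ∉ s) :
    (1 - C (x i) * X) * PowerSeries.mk (Hfun x (insert i s))
      = PowerSeries.mk (Hfun x s) := by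
  ext n
  rw [sub_mul, one_mul, map_sub, mul_assoc, coeff_C_mul]
  cases n with
  | zero => simp [PowerSeries.coeff_zero_eq_constantCoeff, Hfun_zero]
  | succ n =>
    rw [coeff_succ_X_mul]
    simp only [coeff_mk]
    rw [Hfun_rec x hi n]; ring

lemma prod_inv_eq {N : ℕ} (x : Fin N → ℝ) (t : Finset (Fin N)) :
    ∏ i ∈ t, (1 - C (x i) * X)⁻¹ = PowerSeries.mk (Hfun x t) := by
  classical
  induction t using Finset.induction_on with
  | empty => simp [mk_Hfun_empty]
  | insert i s hi ih =>
    rw [Finset.prod_insert hi, ih, ← key_step x hi, ← mul_assoc,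
      PowerSeries.inv_mul_cancel _ (constCoeff_ne x i), one_mul]

lemma hSubset_nat {N : ℕ} (x : Fin N → ℝ) (s : Finset (Fin N)) (m : ℕ) :
    hSubset x s (m : ℤ) = Hfun x s m := by
  rw [hSubset, dif_pos (Int.ofNat_nonneg m)]
  simp [Hfun]

lemma hSubset_neg {N : ℕ} (x : Fin N → ℝ) (s : Finset (Fin N)) {d : ℤ} (hd : d < 0) :
    hSubset x s d = 0 := dif_neg (not_le.2 hd)

lemma hpow (θ : ℝ) (k : ℕ) : (-(C θ * X)) ^ k = C ((-θ) ^ k) * X ^ k := by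
  have h : -(C θ * X) = C (-θ) * X := by rw [map_neg, neg_mul]
  rw [h, mul_pow, ← map_pow]


/-- Generating function of the eigenvalues of Heckman–Polychronakos operators on Jack
polynomials: with `ℓ_i = λ_i + θ(N-i)` and
`eig_m(λ) = ∑_{k=1}^N (-θ)^{k-1} h^{(k)}_{m+1-k}(ℓ)`, one has
`1 - θz ∑_m eig_m z^m = ∏_i (1-(ℓ_i+θ)z)/(1-ℓ_i z)` in `ℝ[[z]]`. -/
theorem eigenvalue_generating_function (N : ℕ) (hN : 0 < N) (θ : ℝ)
    (lam : Fin N → ℕ) (hlam : Antitone lam)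
    (ℓ : Fin N → ℝ) (hℓ : ∀ i, ℓ i = (lam i : ℝ) + θ * ((N : ℝ) - 1 - (i : ℕ)))
    (eig : ℕ → ℝ)
    (heig : ∀ m, eig m = ∑ k ∈ Finset.Icc 1 N, (-θ) ^ (k - 1) * hSym ℓ k ((m : ℤ) + 1 - (k : ℤ))) :
    1 - PowerSeries.C θ * PowerSeries.X * PowerSeries.mk (fun m => eig m)
      = ∏ i : Fin N,
          ((1 - PowerSeries.C (ℓ i + θ) * PowerSeries.X) *
            (1 - PowerSeries.C (ℓ i) * PowerSeries.X)⁻¹) := by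
  classical
  have factor : ∀ i : Fin N, (1 - C (ℓ i + θ) * X) * (1 - C (ℓ i) * X)⁻¹
      = -(C θ * X) * (1 - C (ℓ i) * X)⁻¹ + 1 := by
    intro i
    have h1 : (1 - C (ℓ i + θ) * X) = (1 - C (ℓ i) * X) + (-(C θ * X)) := by
      rw [map_add]; ring
    rw [h1, add_mul, PowerSeries.mul_inv_cancel _ (constCoeff_ne ℓ i)]
    ring
  have main : ∏ i : Fin N, ((1 - C (ℓ i + θ) * X) * (1 - C (ℓ i) * X)⁻¹)
      = ∑ k ∈ Finset.range (N + 1), C ((-θ) ^ k) *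
          (X ^ k * ∑ t ∈ Finset.powersetCard k Finset.univ, PowerSeries.mk (Hfun ℓ t)) := by
    calc
      _ = ∏ i : Fin N, (-(C θ * X) * (1 - C (ℓ i) * X)⁻¹ + 1) :=
        Finset.prod_congr rfl fun i _ => factor i
      _ = ∑ t ∈ (Finset.univ : Finset (Fin N)).powerset,
            (∏ i ∈ t, -(C θ * X) * (1 - C (ℓ i) * X)⁻¹) *
              ∏ _i ∈ Finset.univ \ t, (1 : ℝ⟦X⟧) :=
        Finset.prod_add _ _ _
      _ = ∑ t ∈ (Finset.univ : Finset (Fin N)).powerset,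
            C ((-θ) ^ t.card) * (X ^ t.card * PowerSeries.mk (Hfun ℓ t)) := by
        refine Finset.sum_congr rfl fun t _ => ?_
        rw [Finset.prod_const_one, mul_one, Finset.prod_mul_distrib, Finset.prod_const,
          prod_inv_eq, hpow θ t.card, mul_assoc]
      _ = ∑ k ∈ Finset.range (N + 1), ∑ t ∈ Finset.powersetCard k Finset.univ,
            C ((-θ) ^ t.card) * (X ^ t.card * PowerSeries.mk (Hfun ℓ t)) := by
        rw [Finset.sum_powerset]
        simp
      _ = _ := by
        refine Finset.sum_congr rfl fun k _ => ?_
        rw [Finset.mul_sum, Finset.mul_sum]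
        refine Finset.sum_congr rfl fun t ht => ?_
        rw [(Finset.mem_powersetCard.1 ht).2]
  rw [main]
  ext n
  rw [map_sub, map_sum]
  have hterm : ∀ k n : ℕ,
      (coeff n) (C ((-θ) ^ k) *
        (X ^ k * ∑ t ∈ Finset.powersetCard k Finset.univ, PowerSeries.mk (Hfun ℓ t)))
      = (-θ) ^ k * hSym ℓ k ((n : ℤ) - k) := by
    intro k n
    rw [coeff_C_mul, coeff_X_pow_mul']
    congr 1
    by_cases hk : k ≤ n
    · rw [if_pos hk, map_sum, hSym]
      refine (Finset.sum_congr rfl fun t _ => ?_).symm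
      rw [show ((n : ℤ) - k) = ((n - k : ℕ) : ℤ) by omega, hSubset_nat]
      simp
    · rw [if_neg hk, hSym]
      exact (Finset.sum_eq_zero fun t _ => hSubset_neg _ _ (by omega)).symm
  rw [Finset.sum_congr rfl fun k _ => hterm k n]
  have hsplit : Finset.range (N + 1) = insert 0 (Finset.Icc 1 N) := by
    ext k; simp; omega
  rw [hsplit, Finset.sum_insert (by simp)]
  have hzero : ∀ n : ℕ, (-θ) ^ 0 * hSym ℓ 0 ((n : ℤ) - (0 : ℕ)) = if n = 0 then 1 else 0 := by
    intro n
    rw [pow_zero, one_mul, hSym]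
    simp only [Finset.powersetCard_zero, Finset.sum_singleton]
    rw [show ((n : ℤ) - (0:ℕ)) = ((n : ℕ) : ℤ) by omega, hSubset_nat]
    cases n with
    | zero => simp [Hfun_zero]
    | succ n => simp [Hfun_empty]
  rw [hzero]
  cases n with
  | zero =>
    rw [if_pos rfl]
    have h1 : (coeff 0) (C θ * X * PowerSeries.mk fun m => eig m) = 0 := by
      rw [mul_assoc, coeff_C_mul]
      simp [PowerSeries.coeff_zero_eq_constantCoeff]
    rw [h1, coeff_one, if_pos rfl, sub_zero]
    refine (add_eq_left.2 (Finset.sum_eq_zero fun k hk => ?_)).symm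
    have hk1 : 1 ≤ k := (Finset.mem_Icc.1 hk).1
    rw [hSym]
    rw [Finset.sum_eq_zero fun t _ => hSubset_neg _ _ (by omega), mul_zero]
  | succ m =>
    rw [if_neg (Nat.succ_ne_zero m), zero_add, coeff_one, if_neg (Nat.succ_ne_zero m)]
    have h1 : (coeff (m + 1)) (C θ * X * PowerSeries.mk fun m => eig m) = θ * eig m := by
      rw [mul_assoc, coeff_C_mul, coeff_succ_X_mul, coeff_mk]
    rw [h1, heig m, zero_sub, Finset.mul_sum, ← Finset.sum_neg_distrib]
    refine Finset.sum_congr rfl fun k hk => ?_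
    have hk1 : 1 ≤ k := (Finset.mem_Icc.1 hk).1
    have h2 : ((m + 1 : ℕ) : ℤ) - k = (m : ℤ) + 1 - k := by push_cast; ring
    rw [h2]
    have h3 : (-θ) ^ k = -θ * (-θ) ^ (k - 1) := by
      conv_lhs => rw [show k = (k - 1) + 1 by omega]
      rw [pow_succ]; ring
    rw [h3]; ring
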